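/- For every fixed β ∈ (0,∞), the map α ↦ Ĩ_{α,β}(X:Y) is non-decreasing on (0,∞): for all 0 < b ≤ a < ∞, Ĩ_{b,β}(X:Y) ≤ Ĩ_{a,β}(X:Y), where at α = 1 the value is Ĩ_{1,β}(X:Y) = I(X:Y). -/

import Mathlib

open scoped BigOperators

set_option linter.unusedSectionVars false
set_option linter.unusedVariables false
set_option maxHeartbeats 1000000

noncomputable section

variable {𝓧 𝓨 : Type*} [Fintype 𝓧] [Fintype 𝓨]

/-- Marginal distribution of the first component. -/
def pX (P : 𝓧 × 𝓨 → ℝ) (x : 𝓧) : ℝ := ∑ y, P (x, y)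

/-- Marginal distribution of the second component. -/
def pY (P : 𝓧 × 𝓨 → ℝ) (y : 𝓨) : ℝ := ∑ x, P (x, y)

/-- Conditional distribution `P_{X|Y}(x|y)`. -/
def pCond (P : 𝓧 × 𝓨 → ℝ) (x : 𝓧) (y : 𝓨) : ℝ := P (x, y) / pY P y


section Aux
variable (P : 𝓧 × 𝓨 → ℝ)

lemma pX_nonneg (hP : ∀ p, 0 ≤ P p) (x : 𝓧) : 0 ≤ pX P x :=
  Finset.sum_nonneg fun _ _ => hP _

lemma pY_nonneg (hP : ∀ p, 0 ≤ P p) (y : 𝓨) : 0 ≤ pY P y :=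
  Finset.sum_nonneg fun _ _ => hP _

lemma pCond_nonneg (hP : ∀ p, 0 ≤ P p) (x : 𝓧) (y : 𝓨) : 0 ≤ pCond P x y :=
  div_nonneg (hP _) (pY_nonneg P hP y)

lemma P_le_pX (hP : ∀ p, 0 ≤ P p) (x : 𝓧) (y : 𝓨) : P (x, y) ≤ pX P x :=
  Finset.single_le_sum (fun i _ => hP (x, i)) (Finset.mem_univ y)

lemma P_le_pY (hP : ∀ p, 0 ≤ P p) (x : 𝓧) (y : 𝓨) : P (x, y) ≤ pY P y :=
  Finset.single_le_sum (fun i _ => hP (i, y)) (Finset.mem_univ x)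

lemma pX_pos_of_P_pos (hP : ∀ p, 0 ≤ P p) {x : 𝓧} {y : 𝓨} (h : 0 < P (x, y)) : 0 < pX P x :=
  lt_of_lt_of_le h (P_le_pX P hP x y)

lemma pY_pos_of_P_pos (hP : ∀ p, 0 ≤ P p) {x : 𝓧} {y : 𝓨} (h : 0 < P (x, y)) : 0 < pY P y :=
  lt_of_lt_of_le h (P_le_pY P hP x y)

lemma sum_pY_eq_one (hPsum : ∑ p, P p = 1) : ∑ y, pY P y = 1 := by
  unfold pY
  rw [Finset.sum_comm, ← Fintype.sum_prod_type]
  exact hPsum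

/-- support of `pY` -/
def FY : Finset 𝓨 := Finset.univ.filter fun y => 0 < pY P y

/-- support of `P (·, y)` -/
def FXy (y : 𝓨) : Finset 𝓧 := Finset.univ.filter fun x => 0 < P (x, y)

lemma mem_FY {y : 𝓨} : y ∈ FY P ↔ 0 < pY P y := by simp [FY]

lemma mem_FXy {x : 𝓧} {y : 𝓨} : x ∈ FXy P y ↔ 0 < P (x, y) := by simp [FXy]

lemma sum_pY_filter (hP : ∀ p, 0 ≤ P p) (hPsum : ∑ p, P p = 1) :
    ∑ y ∈ FY P, pY P y = 1 := by
  rw [FY, Finset.sum_filter_of_ne, sum_pY_eq_one P hPsum]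
  intro y _ h
  exact lt_of_le_of_ne (pY_nonneg P hP y) (Ne.symm h)

lemma sum_pCond_filter (hP : ∀ p, 0 ≤ P p) {y : 𝓨} (hy : 0 < pY P y) :
    ∑ x ∈ FXy P y, pCond P x y = 1 := by
  have h1 : ∑ x, pCond P x y = 1 := by
    unfold pCond
    rw [← Finset.sum_div]
    exact div_self (ne_of_gt hy)
  rw [FXy, Finset.sum_filter_of_ne, h1]
  intro x _ h
  have : P (x, y) ≠ 0 := by
    intro h0; apply h; unfold pCond; rw [h0, zero_div]
  exact lt_of_le_of_ne (hP _) (Ne.symm this)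

lemma exists_P_pos (hP : ∀ p, 0 ≤ P p) {y : 𝓨} (hy : 0 < pY P y) : ∃ x, 0 < P (x, y) := by
  by_contra h
  push_neg at h
  have : pY P y ≤ 0 := Finset.sum_nonpos fun x _ => h x
  linarith

lemma exists_pY_pos (hP : ∀ p, 0 ≤ P p) (hPsum : ∑ p, P p = 1) : ∃ y, 0 < pY P y := by
  by_contra h
  push_neg at h
  have : (1 : ℝ) ≤ 0 := by
    rw [← sum_pY_eq_one P hPsum]
    exact Finset.sum_nonpos fun y _ => h y
  linarith

end Aux

/-- Weighted two-term Hölder inequality. -/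
lemma hoelder2 {ι : Type*} (t : Finset ι) (w a b : ι → ℝ)
    (hw : ∀ i ∈ t, 0 ≤ w i) (ha : ∀ i ∈ t, 0 ≤ a i) (hb : ∀ i ∈ t, 0 ≤ b i)
    {u v : ℝ} (hu : 0 ≤ u) (hv : 0 ≤ v) (huv : u + v = 1)
    (hA : 0 < ∑ i ∈ t, w i * a i) (hB : 0 < ∑ i ∈ t, w i * b i) :
    ∑ i ∈ t, w i * (a i ^ u * b i ^ v) ≤
      (∑ i ∈ t, w i * a i) ^ u * (∑ i ∈ t, w i * b i) ^ v := by
  set A := ∑ i ∈ t, w i * a i with hAdef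
  set B := ∑ i ∈ t, w i * b i with hBdef
  have hAu : (0:ℝ) < A ^ u := Real.rpow_pos_of_pos hA u
  have hBv : (0:ℝ) < B ^ v := Real.rpow_pos_of_pos hB v
  have step1 : ∑ i ∈ t, w i * (a i ^ u * b i ^ v)
      = (A ^ u * B ^ v) * ∑ i ∈ t, w i * ((a i / A) ^ u * (b i / B) ^ v) := by
    rw [Finset.mul_sum]
    refine Finset.sum_congr rfl fun i hi => ?_
    rw [Real.div_rpow (ha i hi) hA.le, Real.div_rpow (hb i hi) hB.le]
    field_simp
  have step2 : ∑ i ∈ t, w i * ((a i / A) ^ u * (b i / B) ^ v)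
      ≤ ∑ i ∈ t, w i * (u * (a i / A) + v * (b i / B)) := by
    refine Finset.sum_le_sum fun i hi => ?_
    refine mul_le_mul_of_nonneg_left ?_ (hw i hi)
    exact Real.geom_mean_le_arith_mean2_weighted hu hv
      (div_nonneg (ha i hi) hA.le) (div_nonneg (hb i hi) hB.le) huv
  have step3 : ∑ i ∈ t, w i * (u * (a i / A) + v * (b i / B)) = 1 := by
    have : ∑ i ∈ t, w i * (u * (a i / A) + v * (b i / B))
        = (u / A) * ∑ i ∈ t, w i * a i + (v / B) * ∑ i ∈ t, w i * b i := by
      rw [Finset.mul_sum, Finset.mul_sum, ← Finset.sum_add_distrib]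
      refine Finset.sum_congr rfl fun i hi => ?_
      field_simp
    rw [this, ← hAdef, ← hBdef]
    field_simp
    linarith
  calc ∑ i ∈ t, w i * (a i ^ u * b i ^ v)
      = (A ^ u * B ^ v) * ∑ i ∈ t, w i * ((a i / A) ^ u * (b i / B) ^ v) := step1
    _ ≤ (A ^ u * B ^ v) * ∑ i ∈ t, w i * (u * (a i / A) + v * (b i / B)) := by
        exact mul_le_mul_of_nonneg_left step2 (by positivity)
    _ = A ^ u * B ^ v := by rw [step3, mul_one]

/-- Jensen's inequality for `logb 2`. -/
lemma jensen_logb {ι : Type*} (t : Finset ι) (w p : ι → ℝ)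
    (hw : ∀ i ∈ t, 0 ≤ w i) (hw1 : ∑ i ∈ t, w i = 1) (hp : ∀ i ∈ t, 0 < p i) :
    ∑ i ∈ t, w i * Real.logb 2 (p i) ≤ Real.logb 2 (∑ i ∈ t, w i * p i) := by
  have h := (strictConcaveOn_log_Ioi.concaveOn).le_map_sum hw hw1
    (fun i hi => Set.mem_Ioi.mpr (hp i hi))
  simp only [smul_eq_mul] at h
  have hlog2 : (0:ℝ) < Real.log 2 := Real.log_pos (by norm_num)
  calc ∑ i ∈ t, w i * Real.logb 2 (p i)
      = (∑ i ∈ t, w i * Real.log (p i)) / Real.log 2 := by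
        rw [Finset.sum_div]
        exact Finset.sum_congr rfl fun i _ => by rw [Real.logb, mul_div_assoc]
    _ ≤ Real.log (∑ i ∈ t, w i * p i) / Real.log 2 := by
        gcongr
    _ = Real.logb 2 (∑ i ∈ t, w i * p i) := rfl

section SG
variable (P : 𝓧 × 𝓨 → ℝ)

def Sfun (α : ℝ) (y : 𝓨) : ℝ :=
  ∑ x, if 0 < pX P x then pX P x ^ (1 - α) * pCond P x y ^ α else 0

def Gfun (α β : ℝ) : ℝ :=
  ∑ y, if 0 < pY P y then pY P y * (Sfun P α y) ^ (β / α) else 0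

lemma S_eq (hP : ∀ p, 0 ≤ P p) {α : ℝ} (hα : α ≠ 0) (y : 𝓨) :
    Sfun P α y = ∑ x ∈ FXy P y, pX P x ^ (1 - α) * pCond P x y ^ α := by
  unfold Sfun
  rw [← Finset.sum_filter]
  symm
  apply Finset.sum_subset
  · intro x hx
    rw [mem_FXy] at hx
    simp only [Finset.mem_filter, Finset.mem_univ, true_and]
    exact pX_pos_of_P_pos P hP hx
  · intro x _ hx
    rw [mem_FXy] at hx
    have hP0 : P (x, y) = 0 := le_antisymm (not_lt.mp hx) (hP _)
    have : pCond P x y = 0 := by unfold pCond; rw [hP0, zero_div]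
    rw [this, Real.zero_rpow hα, mul_zero]

lemma S_pos (hP : ∀ p, 0 ≤ P p) {α : ℝ} (hα : 0 < α) {y : 𝓨} (hy : 0 < pY P y) :
    0 < Sfun P α y := by
  obtain ⟨x0, hx0⟩ := exists_P_pos P hP hy
  unfold Sfun
  apply Finset.sum_pos'
  · intro x _
    split_ifs with h
    · exact mul_nonneg (Real.rpow_nonneg (le_of_lt h) _)
        (Real.rpow_nonneg (pCond_nonneg P hP x y) _)
    · exact le_refl 0
  · refine ⟨x0, Finset.mem_univ _, ?_⟩
    have hpx : 0 < pX P x0 := pX_pos_of_P_pos P hP hx0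
    rw [if_pos hpx]
    exact mul_pos (Real.rpow_pos_of_pos hpx _)
      (Real.rpow_pos_of_pos (div_pos hx0 hy) _)

lemma S_one (hP : ∀ p, 0 ≤ P p) {y : 𝓨} (hy : 0 < pY P y) : Sfun P 1 y = 1 := by
  rw [S_eq P hP one_ne_zero y]
  have h : ∀ x ∈ FXy P y, pX P x ^ (1 - (1:ℝ)) * pCond P x y ^ (1:ℝ) = pCond P x y := by
    intro x hx
    rw [sub_self, Real.rpow_zero, Real.rpow_one, one_mul]
  rw [Finset.sum_congr rfl h, sum_pCond_filter P hP hy]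

lemma G_eq (α β : ℝ) : Gfun P α β = ∑ y ∈ FY P, pY P y * (Sfun P α y) ^ (β / α) := by
  unfold Gfun FY
  rw [Finset.sum_filter]

lemma G_pos (hP : ∀ p, 0 ≤ P p) (hPsum : ∑ p, P p = 1) {α : ℝ} (hα : 0 < α) (β : ℝ) :
    0 < Gfun P α β := by
  obtain ⟨y0, hy0⟩ := exists_pY_pos P hP hPsum
  unfold Gfun
  apply Finset.sum_pos'
  · intro y _
    split_ifs with h
    · exact mul_nonneg h.le (Real.rpow_nonneg (S_pos P hP hα h).le _)
    · exact le_refl 0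
  · refine ⟨y0, Finset.mem_univ _, ?_⟩
    rw [if_pos hy0]
    exact mul_pos hy0 (Real.rpow_pos_of_pos (S_pos P hP hα hy0) _)

lemma G_one (hP : ∀ p, 0 ≤ P p) (hPsum : ∑ p, P p = 1) (β : ℝ) : Gfun P 1 β = 1 := by
  rw [G_eq]
  have h : ∀ y ∈ FY P, pY P y * Sfun P 1 y ^ (β / 1) = pY P y := by
    intro y hy
    rw [mem_FY] at hy
    rw [S_one P hP hy, Real.one_rpow, mul_one]
  rw [Finset.sum_congr rfl h]
  exact sum_pY_filter P hP hPsum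

end SG


/-- Two-parameter Rényi mutual information `Ĩ_{α,β}(X:Y)` for `α ≠ 1`. -/
def Itilde (P : 𝓧 × 𝓨 → ℝ) (α β : ℝ) : ℝ :=
  α / (β * (α - 1)) *
    Real.logb 2 (∑ y, if 0 < pY P y then
      pY P y *
        (∑ x, if 0 < pX P x then pX P x ^ (1 - α) * pCond P x y ^ α else 0) ^ (β / α)
      else 0)

/-- Shannon mutual information `I(X:Y)`. -/
def shannonMI (P : 𝓧 × 𝓨 → ℝ) : ℝ :=
  ∑ p, if 0 < P p then P p * Real.logb 2 (pCond P p.1 p.2 / pX P p.1) else 0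


section LemA
variable (P : 𝓧 × 𝓨 → ℝ)

/-- the `y`-slice of the Shannon mutual information -/
def Iy (y : 𝓨) : ℝ := ∑ x ∈ FXy P y, pCond P x y * Real.logb 2 (pCond P x y / pX P x)

lemma logS_ge (hP : ∀ p, 0 ≤ P p) {α : ℝ} (hα : 0 < α) {y : 𝓨} (hy : 0 < pY P y) :
    (α - 1) * Iy P y ≤ Real.logb 2 (Sfun P α y) := by
  have hS : Sfun P α y
      = ∑ x ∈ FXy P y, pCond P x y * ((pCond P x y / pX P x) ^ (α - 1)) := by
    rw [S_eq P hP (ne_of_gt hα) y]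
    refine Finset.sum_congr rfl fun x hx => ?_
    rw [mem_FXy] at hx
    have hpX : 0 < pX P x := pX_pos_of_P_pos P hP hx
    have hpC : 0 < pCond P x y := div_pos hx hy
    rw [Real.div_rpow hpC.le hpX.le]
    rw [show (α : ℝ) - 1 = α - 1 from rfl]
    have e1 : pCond P x y ^ (α - 1) = pCond P x y ^ α / pCond P x y := by
      rw [Real.rpow_sub hpC, Real.rpow_one]
    have e2 : pX P x ^ (1 - α) = pX P x / pX P x ^ α := by
      rw [Real.rpow_sub hpX, Real.rpow_one]
    rw [e1, e2]
    have h1 : pCond P x y ≠ 0 := ne_of_gt hpC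
    have h2 : pX P x ^ α ≠ 0 := ne_of_gt (Real.rpow_pos_of_pos hpX α)
    have h3 : pX P x ^ (α - 1) ≠ 0 := ne_of_gt (Real.rpow_pos_of_pos hpX _)
    have e4 : pX P x * pX P x ^ (-1 + α) = pX P x ^ α := by
      nth_rewrite 1 [← Real.rpow_one (pX P x)]
      rw [← Real.rpow_add hpX]
      norm_num
    field_simp
    have e5 : pX P x ^ (α - 1) = pX P x ^ (-1 + α) := by congr 1; ring
    linear_combination pX P x * e5 + e4
  rw [hS]
  have hJ := jensen_logb (FXy P y) (fun x => pCond P x y)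
    (fun x => (pCond P x y / pX P x) ^ (α - 1))
    (fun x _ => pCond_nonneg P hP x y) (sum_pCond_filter P hP hy)
    (fun x hx => by
      rw [mem_FXy] at hx
      exact Real.rpow_pos_of_pos (div_pos (div_pos hx hy) (pX_pos_of_P_pos P hP hx)) _)
  refine le_trans ?_ hJ
  rw [Iy, Finset.mul_sum]
  refine le_of_eq (Finset.sum_congr rfl fun x hx => ?_)
  rw [mem_FXy] at hx
  have ht : 0 < pCond P x y / pX P x := div_pos (div_pos hx hy) (pX_pos_of_P_pos P hP hx)
  rw [Real.logb_rpow_eq_mul_logb_of_pos ht]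
  ring

lemma shannonMI_eq (hP : ∀ p, 0 ≤ P p) :
    shannonMI P = ∑ y ∈ FY P, pY P y * Iy P y := by
  unfold shannonMI
  rw [Fintype.sum_prod_type, Finset.sum_comm]
  have inner : ∀ y : 𝓨, (∑ x, if 0 < P (x, y) then
      P (x, y) * Real.logb 2 (pCond P x y / pX P x) else 0)
      = ∑ x ∈ FXy P y, P (x, y) * Real.logb 2 (pCond P x y / pX P x) := by
    intro y
    rw [FXy, Finset.sum_filter]
  have step : ∀ y ∈ FY P, (∑ x ∈ FXy P y, P (x, y) * Real.logb 2 (pCond P x y / pX P x))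
      = pY P y * Iy P y := by
    intro y hy
    rw [mem_FY] at hy
    rw [Iy, Finset.mul_sum]
    refine Finset.sum_congr rfl fun x hx => ?_
    have : pY P y * pCond P x y = P (x, y) := by
      unfold pCond
      field_simp
    rw [← mul_assoc, this]
  rw [← Finset.sum_congr rfl step]
  have hfilter : ∑ y ∈ FY P, (∑ x ∈ FXy P y, P (x, y) * Real.logb 2 (pCond P x y / pX P x))
      = ∑ y, (∑ x ∈ FXy P y, P (x, y) * Real.logb 2 (pCond P x y / pX P x)) := by
    rw [FY]
    apply Finset.sum_filter_of_ne
    intro y _ hne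
    obtain ⟨x, hx, -⟩ := Finset.exists_ne_zero_of_sum_ne_zero hne
    rw [mem_FXy] at hx
    exact pY_pos_of_P_pos P hP hx
  rw [hfilter]
  refine Finset.sum_congr rfl fun y _ => ?_
  exact inner y

lemma lemA (hP : ∀ p, 0 ≤ P p) (hPsum : ∑ p, P p = 1)
    {α β : ℝ} (hα : 0 < α) (hβ : 0 < β) :
    β / α * ((α - 1) * shannonMI P) ≤ Real.logb 2 (Gfun P α β) := by
  have hba : 0 < β / α := div_pos hβ hα
  have step2 : ∑ y ∈ FY P, pY P y * Real.logb 2 ((Sfun P α y) ^ (β / α))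
      ≤ Real.logb 2 (Gfun P α β) := by
    rw [G_eq]
    apply jensen_logb (FY P) (fun y => pY P y) (fun y => (Sfun P α y) ^ (β / α))
      (fun y _ => pY_nonneg P hP y) (sum_pY_filter P hP hPsum)
    intro y hy
    rw [mem_FY] at hy
    exact Real.rpow_pos_of_pos (S_pos P hP hα hy) _
  refine le_trans ?_ step2
  rw [shannonMI_eq P hP]
  rw [Finset.mul_sum, Finset.mul_sum]
  apply Finset.sum_le_sum
  intro y hy
  rw [mem_FY] at hy
  rw [Real.logb_rpow_eq_mul_logb_of_pos (S_pos P hP hα hy)]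
  calc β / α * ((α - 1) * (pY P y * Iy P y))
      = pY P y * (β / α * ((α - 1) * Iy P y)) := by ring
    _ ≤ pY P y * (β / α * Real.logb 2 (Sfun P α y)) := by
        apply mul_le_mul_of_nonneg_left _ (pY_nonneg P hP y)
        exact mul_le_mul_of_nonneg_left (logS_ge P hP hα hy) hba.le
    _ = pY P y * (β / α * Real.logb 2 (Sfun P α y)) := rfl

end LemA

section LemB
variable (P : 𝓧 × 𝓨 → ℝ)

lemma sum_pX_t_one (hP : ∀ p, 0 ≤ P p) {y : 𝓨} (hy : 0 < pY P y) :
    ∑ x ∈ FXy P y, pX P x * (pCond P x y / pX P x) = 1 := by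
  rw [← sum_pCond_filter P hP hy]
  refine Finset.sum_congr rfl fun x hx => ?_
  rw [mem_FXy] at hx
  have hpX : pX P x ≠ 0 := ne_of_gt (pX_pos_of_P_pos P hP hx)
  field_simp

lemma sum_pX_t_rpow (hP : ∀ p, 0 ≤ P p) {α : ℝ} (hα : α ≠ 0) {y : 𝓨} (hy : 0 < pY P y) :
    ∑ x ∈ FXy P y, pX P x * (pCond P x y / pX P x) ^ α = Sfun P α y := by
  rw [S_eq P hP hα y]
  refine Finset.sum_congr rfl fun x hx => ?_
  rw [mem_FXy] at hx
  have hpX : 0 < pX P x := pX_pos_of_P_pos P hP hx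
  have hpC : 0 < pCond P x y := div_pos hx hy
  rw [Real.div_rpow hpC.le hpX.le]
  have e2 : pX P x ^ (1 - α) = pX P x / pX P x ^ α := by
    rw [Real.rpow_sub hpX, Real.rpow_one]
  rw [e2]
  have h2 : pX P x ^ α ≠ 0 := ne_of_gt (Real.rpow_pos_of_pos hpX α)
  field_simp

/-- Lyapunov interpolation per `y`. -/
lemma S_interp (hP : ∀ p, 0 ≤ P p) {α α' lam : ℝ} (hα : 0 < α) (hα' : 0 < α')
    (hl0 : 0 < lam) (hl1 : lam < 1) (hrel : 1 / α' = lam / α + (1 - lam))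
    {y : 𝓨} (hy : 0 < pY P y) :
    Sfun P α' y ≤ (Sfun P α y) ^ (lam * α' / α) := by
  set u : ℝ := lam * α' / α with hu_def
  set v : ℝ := (1 - lam) * α' with hv_def
  have hu : 0 < u := by positivity
  have hv : 0 < v := by
    have : 0 < 1 - lam := by linarith
    positivity
  have huv : u + v = 1 := by
    have h : u + v = α' * (lam / α + (1 - lam)) := by rw [hu_def, hv_def]; ring
    rw [h, ← hrel]
    field_simp
  have key : Sfun P α' y
      = ∑ x ∈ FXy P y, pX P x * (((pCond P x y / pX P x) ^ α) ^ u
          * (pCond P x y / pX P x) ^ v) := by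
    rw [← sum_pX_t_rpow P hP (ne_of_gt hα') hy]
    refine Finset.sum_congr rfl fun x hx => ?_
    rw [mem_FXy] at hx
    have ht : 0 < pCond P x y / pX P x :=
      div_pos (div_pos hx hy) (pX_pos_of_P_pos P hP hx)
    have hexp : α' = α * u + v := by
      rw [hu_def, hv_def]
      field_simp
      ring
    rw [← Real.rpow_mul ht.le, ← Real.rpow_add ht, ← hexp]
  rw [key]
  have H := hoelder2 (FXy P y) (fun x => pX P x)
    (fun x => (pCond P x y / pX P x) ^ α) (fun x => pCond P x y / pX P x)
    (fun x hx => (pX_pos_of_P_pos P hP (mem_FXy P |>.mp hx)).le)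
    (fun x hx => Real.rpow_nonneg (div_nonneg (pCond_nonneg P hP x y)
      (pX_nonneg P hP x)) _)
    (fun x hx => div_nonneg (pCond_nonneg P hP x y) (pX_nonneg P hP x))
    hu.le hv.le huv ?_ ?_
  · calc ∑ x ∈ FXy P y, pX P x * (((pCond P x y / pX P x) ^ α) ^ u
          * (pCond P x y / pX P x) ^ v)
        ≤ (∑ x ∈ FXy P y, pX P x * (pCond P x y / pX P x) ^ α) ^ u
          * (∑ x ∈ FXy P y, pX P x * (pCond P x y / pX P x)) ^ v := H
      _ = (Sfun P α y) ^ u := by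
          rw [sum_pX_t_rpow P hP (ne_of_gt hα) hy, sum_pX_t_one P hP hy,
            Real.one_rpow, mul_one]
  · rw [sum_pX_t_rpow P hP (ne_of_gt hα) hy]
    exact S_pos P hP hα hy
  · rw [sum_pX_t_one P hP hy]
    norm_num

/-- Interpolation for `G`. -/
lemma lemB (hP : ∀ p, 0 ≤ P p) (hPsum : ∑ p, P p = 1)
    {α α' lam β : ℝ} (hα : 0 < α) (hα' : 0 < α')
    (hl0 : 0 < lam) (hl1 : lam < 1) (hrel : 1 / α' = lam / α + (1 - lam)) (hβ : 0 < β) :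
    Real.logb 2 (Gfun P α' β) ≤ lam * Real.logb 2 (Gfun P α β) := by
  have hG' : 0 < Gfun P α' β := G_pos P hP hPsum hα' β
  have hG : 0 < Gfun P α β := G_pos P hP hPsum hα β
  have B3 : Gfun P α' β ≤ (Gfun P α β) ^ lam := by
    have step : ∀ y ∈ FY P, pY P y * (Sfun P α' y) ^ (β / α')
        ≤ pY P y * (((Sfun P α y) ^ (β / α)) ^ lam * (1:ℝ) ^ (1 - lam)) := by
      intro y hy
      rw [mem_FY] at hy
      apply mul_le_mul_of_nonneg_left _ (pY_nonneg P hP y)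
      rw [Real.one_rpow, mul_one]
      have hSpos : 0 < Sfun P α y := S_pos P hP hα hy
      have hS'nonneg : 0 ≤ Sfun P α' y := (S_pos P hP hα' hy).le
      calc (Sfun P α' y) ^ (β / α')
          ≤ ((Sfun P α y) ^ (lam * α' / α)) ^ (β / α') := by
            apply Real.rpow_le_rpow hS'nonneg
              (S_interp P hP hα hα' hl0 hl1 hrel hy) (by positivity)
        _ = ((Sfun P α y) ^ (β / α)) ^ lam := by
            rw [← Real.rpow_mul hSpos.le, ← Real.rpow_mul hSpos.le]
            congr 1
            field_simp
    have H := hoelder2 (FY P) (fun y => pY P y)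
      (fun y => (Sfun P α y) ^ (β / α)) (fun _ => (1:ℝ))
      (fun y _ => pY_nonneg P hP y)
      (fun y hy => Real.rpow_nonneg (S_pos P hP hα (mem_FY P |>.mp hy)).le _)
      (fun _ _ => zero_le_one)
      hl0.le (by linarith : (0:ℝ) ≤ 1 - lam) (by ring) ?_ ?_
    · calc Gfun P α' β
          = ∑ y ∈ FY P, pY P y * (Sfun P α' y) ^ (β / α') := G_eq P α' β
        _ ≤ ∑ y ∈ FY P, pY P y * (((Sfun P α y) ^ (β / α)) ^ lam * (1:ℝ) ^ (1 - lam)) :=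
            Finset.sum_le_sum step
        _ ≤ (∑ y ∈ FY P, pY P y * (Sfun P α y) ^ (β / α)) ^ lam
            * (∑ y ∈ FY P, pY P y * (1:ℝ)) ^ (1 - lam) := H
        _ = (Gfun P α β) ^ lam := by
            have h1 : ∑ y ∈ FY P, pY P y * (1:ℝ) = 1 := by
              simp only [mul_one]
              exact sum_pY_filter P hP hPsum
            rw [h1, Real.one_rpow, mul_one, ← G_eq]
    · rw [← G_eq]
      exact hG
    · have h1 : ∑ y ∈ FY P, pY P y * (1:ℝ) = 1 := by
        simp only [mul_one]
        exact sum_pY_filter P hP hPsum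
      rw [h1]
      norm_num
  calc Real.logb 2 (Gfun P α' β)
      ≤ Real.logb 2 ((Gfun P α β) ^ lam) :=
        Real.logb_le_logb_of_le (by norm_num) hG' B3
    _ = lam * Real.logb 2 (Gfun P α β) :=
        Real.logb_rpow_eq_mul_logb_of_pos hG

end LemB


/-- Two-parameter Rényi mutual information, continuously extended at `α = 1`. -/
def ItildeE (P : 𝓧 × 𝓨 → ℝ) (α β : ℝ) : ℝ :=
  if α = 1 then shannonMI P else Itilde P α β


section Main
variable (P : 𝓧 × 𝓨 → ℝ)

lemma Itilde_eq (α β : ℝ) :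
    Itilde P α β = α / (β * (α - 1)) * Real.logb 2 (Gfun P α β) := rfl

/-- above 1 the Rényi MI dominates the Shannon MI -/
lemma cor1 (hP : ∀ p, 0 ≤ P p) (hPsum : ∑ p, P p = 1) {α β : ℝ} (hα : 1 < α) (hβ : 0 < β) :
    shannonMI P ≤ Itilde P α β := by
  have hα0 : 0 < α := by linarith
  have hc : 0 < α / (β * (α - 1)) := by
    apply div_pos hα0
    apply mul_pos hβ
    linarith
  have hA := lemA P hP hPsum hα0 hβ
  have key : α / (β * (α - 1)) * (β / α * ((α - 1) * shannonMI P)) = shannonMI P := by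
    have h1 : α ≠ 0 := ne_of_gt hα0
    have h2 : β ≠ 0 := ne_of_gt hβ
    have h3 : α - 1 ≠ 0 := ne_of_gt (by linarith)
    field_simp
  rw [Itilde_eq, ← key]
  exact mul_le_mul_of_nonneg_left hA hc.le

/-- below 1 the Rényi MI is dominated by the Shannon MI -/
lemma cor2 (hP : ∀ p, 0 ≤ P p) (hPsum : ∑ p, P p = 1) {α β : ℝ} (hα0 : 0 < α) (hα : α < 1)
    (hβ : 0 < β) :
    Itilde P α β ≤ shannonMI P := by
  have hc : α / (β * (α - 1)) < 0 := by
    apply div_neg_of_pos_of_neg hα0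
    have : α - 1 < 0 := by linarith
    exact mul_neg_of_pos_of_neg hβ this
  have hA := lemA P hP hPsum hα0 hβ
  have key : α / (β * (α - 1)) * (β / α * ((α - 1) * shannonMI P)) = shannonMI P := by
    have h1 : α ≠ 0 := ne_of_gt hα0
    have h2 : β ≠ 0 := ne_of_gt hβ
    have h3 : α - 1 ≠ 0 := by intro h; rw [sub_eq_zero] at h; subst h; linarith
    field_simp
  rw [Itilde_eq, ← key]
  exact mul_le_mul_of_nonpos_left hA hc.le

lemma cor3 (hP : ∀ p, 0 ≤ P p) (hPsum : ∑ p, P p = 1) {a b β : ℝ}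
    (hb : 1 < b) (hba : b < a) (hβ : 0 < β) :
    Itilde P b β ≤ Itilde P a β := by
  have ha : 1 < a := lt_trans hb hba
  have hb0 : 0 < b := by linarith
  have ha0 : 0 < a := by linarith
  set lam : ℝ := (a * (b - 1)) / (b * (a - 1)) with hlam
  have hden : 0 < b * (a - 1) := mul_pos hb0 (by linarith)
  have hl0 : 0 < lam := div_pos (mul_pos ha0 (by linarith)) hden
  have hl1 : lam < 1 := by
    rw [hlam, div_lt_one hden]
    nlinarith
  have h1 : a ≠ 0 := ne_of_gt ha0
  have h2 : b ≠ 0 := ne_of_gt hb0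
  have h3 : a - 1 ≠ 0 := ne_of_gt (by linarith)
  have h4 : b - 1 ≠ 0 := ne_of_gt (by linarith)
  have h5 : β ≠ 0 := ne_of_gt hβ
  have hrel : 1 / b = lam / a + (1 - lam) := by
    rw [hlam]
    field_simp
    ring
  have hB := lemB P hP hPsum ha0 hb0 hl0 hl1 hrel hβ
  have hcb : 0 < b / (β * (b - 1)) := div_pos hb0 (mul_pos hβ (by linarith))
  have hcoef : b / (β * (b - 1)) * lam = a / (β * (a - 1)) := by
    rw [hlam]
    field_simp
  calc Itilde P b β = b / (β * (b - 1)) * Real.logb 2 (Gfun P b β) := Itilde_eq P b β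
    _ ≤ b / (β * (b - 1)) * (lam * Real.logb 2 (Gfun P a β)) :=
        mul_le_mul_of_nonneg_left hB hcb.le
    _ = a / (β * (a - 1)) * Real.logb 2 (Gfun P a β) := by
        rw [← mul_assoc, hcoef]
    _ = Itilde P a β := (Itilde_eq P a β).symm

lemma cor4 (hP : ∀ p, 0 ≤ P p) (hPsum : ∑ p, P p = 1) {a b β : ℝ}
    (hb0 : 0 < b) (hba : b < a) (ha : a < 1) (hβ : 0 < β) :
    Itilde P b β ≤ Itilde P a β := by
  have ha0 : 0 < a := lt_trans hb0 hba
  set lam : ℝ := (b * (1 - a)) / (a * (1 - b)) with hlam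
  have hb1 : b < 1 := lt_trans hba ha
  have hden : 0 < a * (1 - b) := mul_pos ha0 (by linarith)
  have hl0 : 0 < lam := div_pos (mul_pos hb0 (by linarith)) hden
  have hl1 : lam < 1 := by
    rw [hlam, div_lt_one hden]
    nlinarith
  have h1 : a ≠ 0 := ne_of_gt ha0
  have h2 : b ≠ 0 := ne_of_gt hb0
  have h3 : a - 1 ≠ 0 := ne_of_lt (by linarith)
  have h4 : b - 1 ≠ 0 := ne_of_lt (by linarith)
  have h5 : β ≠ 0 := ne_of_gt hβ
  have h6 : (1:ℝ) - b ≠ 0 := ne_of_gt (by linarith)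
  have h7 : (1:ℝ) - a ≠ 0 := ne_of_gt (by linarith)
  have hrel : 1 / a = lam / b + (1 - lam) := by
    rw [hlam]
    field_simp
    ring
  have hB := lemB P hP hPsum hb0 ha0 hl0 hl1 hrel hβ
  have hca : a / (β * (a - 1)) < 0 :=
    div_neg_of_pos_of_neg ha0 (mul_neg_of_pos_of_neg hβ (by linarith))
  have hcoef : a / (β * (a - 1)) * lam = b / (β * (b - 1)) := by
    rw [hlam]
    field_simp
    ring
  calc Itilde P b β = b / (β * (b - 1)) * Real.logb 2 (Gfun P b β) := Itilde_eq P b β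
    _ = a / (β * (a - 1)) * lam * Real.logb 2 (Gfun P b β) := by rw [hcoef]
    _ = a / (β * (a - 1)) * (lam * Real.logb 2 (Gfun P b β)) := by ring
    _ ≤ a / (β * (a - 1)) * Real.logb 2 (Gfun P a β) :=
        mul_le_mul_of_nonpos_left hB hca.le
    _ = Itilde P a β := (Itilde_eq P a β).symm

end Main

/-- for fixed `β ∈ (0,∞)`, `α ↦ Ĩ_{α,β}(X:Y)` is non-decreasing
on `(0,∞)`. -/
theorem ItildeE_monotone_in_alpha
    [Nonempty 𝓧] [Nonempty 𝓨]
    (P : 𝓧 × 𝓨 → ℝ) (hP : ∀ p, 0 ≤ P p) (hPsum : ∑ p, P p = 1)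
    (β : ℝ) (hβ : 0 < β) :
    ∀ a b : ℝ, 0 < b → b ≤ a → ItildeE P b β ≤ ItildeE P a β := by
  intro a b hb hba
  rcases eq_or_lt_of_le hba with rfl | hlt
  · exact le_refl _
  have ha0 : 0 < a := lt_trans hb hlt
  unfold ItildeE
  by_cases hbe : b = 1
  · subst hbe
    rw [if_pos rfl, if_neg (by linarith : a ≠ 1)]
    exact cor1 P hP hPsum hlt hβ
  · rw [if_neg hbe]
    by_cases hae : a = 1
    · subst hae
      rw [if_pos rfl]
      exact cor2 P hP hPsum hb hlt hβ
    · rw [if_neg hae]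
      rcases lt_trichotomy b 1 with hb1 | hb1 | hb1
      · rcases lt_trichotomy a 1 with ha1 | ha1 | ha1
        · exact cor4 P hP hPsum hb hlt ha1 hβ
        · exact absurd ha1 hae
        · exact le_trans (cor2 P hP hPsum hb hb1 hβ) (cor1 P hP hPsum ha1 hβ)
      · exact absurd hb1 hbe
      · exact cor3 P hP hPsum hb1 hlt hβ
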